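/- Let Y_1, Y_2, … be i.i.d. from GEV(τ₀, μ₀, ξ₀) with ξ₀ > 0, and let β₀ = μ₀ - τ₀/ξ₀. Then min_{1≤i≤n} Y_i converges almost surely to β₀, and for any γ > 0, (log n)^{(1+γ)ξ₀}·(min_{1≤i≤n} Y_i - β₀) → ∞ almost surely and (log n)^{(1-γ)ξ₀}·(min_{1≤i≤n} Y_i - β₀) → 0 almost surely. -/

import Mathlib

open Filter MeasureTheory ProbabilityTheory

noncomputable def gevCDF (τ₀ μ₀ ξ₀ : ℝ) (y : ℝ) : ℝ :=
  if 0 < 1 + ξ₀ * (y - μ₀) / τ₀ then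
    Real.exp (-(1 + ξ₀ * (y - μ₀) / τ₀) ^ (-1 / ξ₀))
  else if 0 < ξ₀ then 0 else 1

lemma gevCDF_nonneg (τ₀ μ₀ ξ₀ y : ℝ) : 0 ≤ gevCDF τ₀ μ₀ ξ₀ y := by
  unfold gevCDF; split_ifs <;> positivity

lemma gevCDF_le_one (τ₀ μ₀ ξ₀ y : ℝ) : gevCDF τ₀ μ₀ ξ₀ y ≤ 1 := by
  unfold gevCDF
  split_ifs with h
  · calc Real.exp (-(1 + ξ₀ * (y - μ₀) / τ₀) ^ (-1 / ξ₀)) ≤ Real.exp 0 := by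
          apply Real.exp_le_exp.2
          simp only [neg_nonpos]
          exact Real.rpow_nonneg h.le _
      _ = 1 := Real.exp_zero
  · exact zero_le_one
  · exact le_refl 1

lemma gevCDF_eq_zero {τ₀ μ₀ ξ₀ : ℝ} (hτ : 0 < τ₀) (hξ : 0 < ξ₀) {x : ℝ}
    (hx : x ≤ μ₀ - τ₀ / ξ₀) : gevCDF τ₀ μ₀ ξ₀ x = 0 := by
  unfold gevCDF
  rw [if_neg, if_pos hξ]
  push_neg
  have : ξ₀ * (x - μ₀) / τ₀ ≤ -1 := by
    rw [div_le_iff₀ hτ]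
    nlinarith [mul_le_mul_of_nonneg_left (sub_le_sub_right hx μ₀) hξ.le,
      mul_div_cancel₀ τ₀ hξ.ne']
  linarith

lemma gevCDF_add {τ₀ μ₀ ξ₀ : ℝ} (hτ : 0 < τ₀) (hξ : 0 < ξ₀) {t : ℝ} (ht : 0 < t) :
    gevCDF τ₀ μ₀ ξ₀ (μ₀ - τ₀ / ξ₀ + t) = Real.exp (-(ξ₀ * t / τ₀) ^ (-1 / ξ₀)) := by
  have key : 1 + ξ₀ * ((μ₀ - τ₀ / ξ₀ + t) - μ₀) / τ₀ = ξ₀ * t / τ₀ := by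
    field_simp
    ring
  unfold gevCDF
  rw [key, if_pos (by positivity)]

lemma summable_of_eventually_le_invsq {g : ℕ → ℝ} (h0 : ∀ n, 0 ≤ g n)
    (h : ∀ᶠ n in atTop, g n ≤ 1 / ((n : ℝ) + 1) ^ 2) : Summable g := by
  have S1 : Summable (fun n : ℕ => 1 / ((n : ℝ) + 1) ^ 2) := by
    have := (summable_nat_add_iff 1).2 (Real.summable_nat_pow_inv.2 one_lt_two)
    apply this.congr
    intro n
    push_cast
    ring
  obtain ⟨N, hN⟩ := eventually_atTop.1 h
  rw [← summable_nat_add_iff N]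
  apply Summable.of_nonneg_of_le (fun n => h0 _) (fun n => hN _ (Nat.le_add_left N n))
  have := (summable_nat_add_iff N).2 S1
  apply this.congr
  intro n
  push_cast
  ring_nf

lemma bc_helper {Ω : Type*} [MeasurableSpace Ω] (P : Measure Ω) [IsProbabilityMeasure P]
    {s : ℕ → Set Ω} {g : ℕ → ℝ} (h0 : ∀ n, 0 ≤ g n) (hg : Summable g)
    (hle : ∀ n, P (s n) ≤ ENNReal.ofReal (g n)) :
    ∀ᵐ ω ∂P, ∀ᶠ n in atTop, ω ∉ s n := by
  apply ae_eventually_notMem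
  have h1 : ∑' n, P (s n) ≤ ∑' n, ENNReal.ofReal (g n) := ENNReal.tsum_le_tsum hle
  rw [← ENNReal.ofReal_tsum_of_nonneg h0 hg] at h1
  exact (lt_of_le_of_lt h1 ENNReal.ofReal_lt_top).ne

theorem gev_min_convergence_rates {Ω : Type*} [MeasurableSpace Ω] (P : Measure Ω)
    [IsProbabilityMeasure P] (τ₀ μ₀ ξ₀ : ℝ) (hτ : 0 < τ₀) (hξ : 0 < ξ₀)
    (Y : ℕ → Ω → ℝ) (hmeas : ∀ i, Measurable (Y i))
    (hindep : iIndepFun Y P)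
    (hcdf : ∀ i, ∀ y : ℝ, (P {ω | Y i ω ≤ y}).toReal = gevCDF τ₀ μ₀ ξ₀ y) :
    (∀ᵐ ω ∂P, Tendsto
        (fun n : ℕ => (Finset.range (n + 1)).inf' Finset.nonempty_range_add_one
          fun i => Y i ω) atTop (nhds (μ₀ - τ₀ / ξ₀))) ∧
    ∀ γ : ℝ, 0 < γ →
      (∀ᵐ ω ∂P, Tendsto
          (fun n : ℕ => Real.log ((n : ℝ) + 1) ^ ((1 + γ) * ξ₀) *
            (((Finset.range (n + 1)).inf' Finset.nonempty_range_add_one fun i => Y i ω) -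
              (μ₀ - τ₀ / ξ₀))) atTop atTop) ∧
      (∀ᵐ ω ∂P, Tendsto
          (fun n : ℕ => Real.log ((n : ℝ) + 1) ^ ((1 - γ) * ξ₀) *
            (((Finset.range (n + 1)).inf' Finset.nonempty_range_add_one fun i => Y i ω) -
              (μ₀ - τ₀ / ξ₀))) atTop (nhds 0)) := by
  set β := μ₀ - τ₀ / ξ₀ with hβ
  set M : ℕ → Ω → ℝ :=
    fun n ω => (Finset.range (n + 1)).inf' Finset.nonempty_range_add_one fun i => Y i ω with hM
  have hL : Tendsto (fun n : ℕ => Real.log ((n : ℝ) + 1)) atTop atTop :=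
    Real.tendsto_log_atTop.comp (tendsto_atTop_add_const_right _ 1 tendsto_natCast_atTop_atTop)
  have hL1 : ∀ᶠ n : ℕ in atTop, 1 ≤ Real.log ((n : ℝ) + 1) := hL.eventually_ge_atTop 1
  have pFle : ∀ i (x : ℝ), P {ω | Y i ω ≤ x} = ENNReal.ofReal (gevCDF τ₀ μ₀ ξ₀ x) := by
    intro i x
    rw [← hcdf i x, ENNReal.ofReal_toReal (measure_ne_top P _)]
  -- union bound
  have hub : ∀ n (x : ℝ), P {ω | M n ω ≤ x} ≤
      ENNReal.ofReal (((n : ℝ) + 1) * gevCDF τ₀ μ₀ ξ₀ x) := by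
    intro n x
    have hset : {ω | M n ω ≤ x} = ⋃ i ∈ Finset.range (n + 1), {ω | Y i ω ≤ x} := by
      ext ω; simp [hM, Finset.inf'_le_iff]
    rw [hset]
    calc P (⋃ i ∈ Finset.range (n + 1), {ω | Y i ω ≤ x})
        ≤ ∑ i ∈ Finset.range (n + 1), P {ω | Y i ω ≤ x} := measure_biUnion_finset_le _ _
      _ = ENNReal.ofReal (((n : ℝ) + 1) * gevCDF τ₀ μ₀ ξ₀ x) := by
          simp only [pFle]
          rw [Finset.sum_const, Finset.card_range, nsmul_eq_mul,
            ENNReal.ofReal_mul (by positivity)]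
          congr 1
          rw [← ENNReal.ofReal_natCast (n + 1)]
          norm_num
  -- independence: exact probability of the min being large
  have heq : ∀ n (x : ℝ), P {ω | x < M n ω} =
      ENNReal.ofReal ((1 - gevCDF τ₀ μ₀ ξ₀ x) ^ (n + 1)) := by
    intro n x
    have hset : {ω | x < M n ω} = ⋂ i ∈ Finset.range (n + 1), {ω | x < Y i ω} := by
      ext ω; simp [hM, Finset.lt_inf'_iff]
    have hprod := hindep.meas_biInter (S := Finset.range (n + 1))
      (s := fun i => {ω | x < Y i ω}) (fun i _ => ⟨Set.Ioi x, measurableSet_Ioi, rfl⟩)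
    have hterm : ∀ i, P {ω | x < Y i ω} = ENNReal.ofReal (1 - gevCDF τ₀ μ₀ ξ₀ x) := by
      intro i
      have hc : {ω | x < Y i ω} = {ω | Y i ω ≤ x}ᶜ := by ext ω; simp
      rw [hc, prob_compl_eq_one_sub
          (show MeasurableSet {ω | Y i ω ≤ x} from (hmeas i) measurableSet_Iic),
        pFle, ← ENNReal.ofReal_one, ← ENNReal.ofReal_sub _ (gevCDF_nonneg _ _ _ _)]
    rw [hset, hprod]
    simp only [hterm]
    rw [Finset.prod_const, Finset.card_range,
      ← ENNReal.ofReal_pow (by linarith [gevCDF_le_one τ₀ μ₀ ξ₀ x])]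
  -- each Y i is a.s. above β
  have hYgt : ∀ᵐ ω ∂P, ∀ i, β < Y i ω := by
    rw [ae_all_iff]
    intro i
    have h0 : P {ω | Y i ω ≤ β} = 0 := by
      rw [pFle, gevCDF_eq_zero hτ hξ hβ.le, ENNReal.ofReal_zero]
    rw [ae_iff]
    have hs : {ω | ¬ β < Y i ω} = {ω | Y i ω ≤ β} := by ext ω; simp
    rw [hs]; exact h0
  -- core upper-bound-on-the-min lemma
  have hdown : ∀ a : ℝ, 0 < a → a < ξ₀ →
      ∀ᵐ ω ∂P, Tendsto (fun n : ℕ => Real.log ((n : ℝ) + 1) ^ a * (M n ω - β))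
        atTop (nhds 0) := by
    intro a ha haξ
    have key : ∀ m : ℕ, ∀ᵐ ω ∂P, ∀ᶠ n : ℕ in atTop,
        M n ω ≤ β + (1 / ((m : ℝ) + 1)) * Real.log ((n : ℝ) + 1) ^ (-a) := by
      intro m
      set ε : ℝ := 1 / ((m : ℝ) + 1) with hε
      have hεpos : 0 < ε := by positivity
      set t : ℕ → ℝ := fun n => ε * Real.log ((n : ℝ) + 1) ^ (-a) with ht
      set g : ℕ → ℝ := fun n => (1 - gevCDF τ₀ μ₀ ξ₀ (β + t n)) ^ (n + 1) with hg
      have h0 : ∀ n, 0 ≤ g n :=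
        fun n => pow_nonneg (by linarith [gevCDF_le_one τ₀ μ₀ ξ₀ (β + t n)]) _
      have hgsum : Summable g := by
        apply summable_of_eventually_le_invsq h0
        set c : ℝ := (ξ₀ * ε / τ₀) ^ (-1 / ξ₀) with hc
        have hcpos : 0 < c := Real.rpow_pos_of_pos (by positivity) _
        have hsmall : Tendsto (fun n : ℕ => c * Real.log ((n : ℝ) + 1) ^ (a / ξ₀ - 1))
            atTop (nhds 0) := by
          have h1 : Tendsto (fun x : ℝ => x ^ (-(1 - a / ξ₀))) atTop (nhds 0) :=
            tendsto_rpow_neg_atTop (by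
              have : a / ξ₀ < 1 := (div_lt_one hξ).2 haξ
              linarith)
          have h2 := (h1.comp hL).const_mul c
          rw [mul_zero] at h2
          refine h2.congr fun n => ?_
          simp only [Function.comp_apply, neg_sub]
        have hev1 : ∀ᶠ n : ℕ in atTop, c * Real.log ((n : ℝ) + 1) ^ (a / ξ₀ - 1) < 1 / 2 :=
          hsmall.eventually (gt_mem_nhds (by norm_num))
        have hexp : Tendsto (fun x : ℝ => Real.exp (x / 2) / (x / 2)) atTop atTop := by
          have h1 : Tendsto (fun x : ℝ => Real.exp x / x) atTop atTop := by
            simpa using Real.tendsto_exp_div_pow_atTop 1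
          exact h1.comp (Tendsto.atTop_div_const two_pos tendsto_id)
        have hev2 : ∀ᶠ n : ℕ in atTop,
            4 ≤ Real.exp (Real.log ((n : ℝ) + 1) / 2) / (Real.log ((n : ℝ) + 1) / 2) :=
          (hexp.comp hL).eventually_ge_atTop 4
        filter_upwards [hev1, hev2, hL1] with n h1 h2 h3
        set L : ℝ := Real.log ((n : ℝ) + 1) with hLdef
        have hLpos : 0 < L := lt_of_lt_of_le one_pos h3
        have htpos : 0 < t n := mul_pos hεpos (Real.rpow_pos_of_pos hLpos _)
        set F : ℝ := gevCDF τ₀ μ₀ ξ₀ (β + t n) with hFdef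
        have hF : F = Real.exp (-(c * L ^ (a / ξ₀))) := by
          rw [hFdef, hβ, gevCDF_add hτ hξ htpos, hc]
          congr 1
          have htn : t n = ε * L ^ (-a) := rfl
          rw [htn,
            show ξ₀ * (ε * L ^ (-a)) / τ₀ = ξ₀ * ε / τ₀ * L ^ (-a) by ring,
            Real.mul_rpow (by positivity) (Real.rpow_nonneg hLpos.le _),
            ← Real.rpow_mul hLpos.le,
            show -a * (-1 / ξ₀) = a / ξ₀ by ring]
        have hF0 : 0 ≤ F := gevCDF_nonneg _ _ _ _
        have hF1 : F ≤ 1 := gevCDF_le_one _ _ _ _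
        have hexpL : Real.exp L = (n : ℝ) + 1 := Real.exp_log (by positivity)
        have hchain : c * L ^ (a / ξ₀) ≤ L / 2 := by
          have hsplit : L ^ (a / ξ₀) = L ^ (a / ξ₀ - 1) * L := by
            rw [← Real.rpow_add_one hLpos.ne' (a / ξ₀ - 1)]
            ring_nf
          rw [hsplit, ← mul_assoc]
          nlinarith [Real.rpow_pos_of_pos hLpos (a / ξ₀ - 1)]
        have hFge : Real.exp (-(L / 2)) ≤ F := by
          rw [hF]
          exact Real.exp_le_exp.2 (by linarith)
        have hnF : 2 * L ≤ ((n : ℝ) + 1) * F := by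
          have h4 : 2 * L ≤ Real.exp (L / 2) := by
            have hL2 : 0 < L / 2 := by linarith
            rw [le_div_iff₀ hL2] at h2
            linarith
          calc 2 * L ≤ Real.exp (L / 2) := h4
            _ = Real.exp L * Real.exp (-(L / 2)) := by
                rw [← Real.exp_add]; ring_nf
            _ ≤ ((n : ℝ) + 1) * F := by
                rw [hexpL]
                exact mul_le_mul_of_nonneg_left hFge (by positivity)
        have e1 : g n ≤ Real.exp (-(((n : ℝ) + 1) * F)) := by
          have h1F : 1 - F ≤ Real.exp (-F) := by linarith [Real.add_one_le_exp (-F)]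
          calc g n = (1 - F) ^ (n + 1) := rfl
            _ ≤ Real.exp (-F) ^ (n + 1) := pow_le_pow_left₀ (by linarith) h1F _
            _ = Real.exp ((↑(n + 1) : ℝ) * (-F)) := (Real.exp_nat_mul _ _).symm
            _ = Real.exp (-(((n : ℝ) + 1) * F)) := by push_cast; ring_nf
        have e2 : Real.exp (-(((n : ℝ) + 1) * F)) ≤ Real.exp (-(2 * L)) :=
          Real.exp_le_exp.2 (by linarith)
        have e3 : Real.exp (-(2 * L)) = 1 / ((n : ℝ) + 1) ^ 2 := by
          rw [Real.exp_neg, show (2 : ℝ) * L = ((2 : ℕ) : ℝ) * L by norm_num,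
            Real.exp_nat_mul, hexpL]
          norm_num
        calc g n ≤ Real.exp (-(((n : ℝ) + 1) * F)) := e1
          _ ≤ Real.exp (-(2 * L)) := e2
          _ = 1 / ((n : ℝ) + 1) ^ 2 := e3
      have hae := bc_helper P h0 hgsum (fun n => (heq n (β + t n)).le)
      filter_upwards [hae] with ω hω
      filter_upwards [hω] with n hn
      simp only [Set.mem_setOf_eq, not_lt] at hn
      exact hn
    have keyall : ∀ᵐ ω ∂P, ∀ m : ℕ, ∀ᶠ n : ℕ in atTop,
        M n ω ≤ β + (1 / ((m : ℝ) + 1)) * Real.log ((n : ℝ) + 1) ^ (-a) := ae_all_iff.2 key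
    filter_upwards [keyall, hYgt] with ω hω hgt
    rw [NormedAddCommGroup.tendsto_nhds_zero]
    intro ε' hε'
    obtain ⟨m, hm⟩ := exists_nat_one_div_lt hε'
    filter_upwards [hω m, hL1] with n hn hLn
    set L : ℝ := Real.log ((n : ℝ) + 1) with hLdef
    have hLpos : 0 < L := lt_of_lt_of_le one_pos hLn
    have hMgt : β < M n ω := (Finset.lt_inf'_iff _).2 fun i _ => hgt i
    have hnonneg : 0 ≤ M n ω - β := by linarith
    have hb : M n ω - β ≤ 1 / ((m : ℝ) + 1) * L ^ (-a) := by linarith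
    rw [Real.norm_eq_abs, abs_of_nonneg (mul_nonneg (Real.rpow_nonneg hLpos.le a) hnonneg)]
    calc L ^ a * (M n ω - β) ≤ L ^ a * (1 / ((m : ℝ) + 1) * L ^ (-a)) :=
          mul_le_mul_of_nonneg_left hb (Real.rpow_nonneg hLpos.le a)
      _ = 1 / ((m : ℝ) + 1) * (L ^ a * L ^ (-a)) := by ring
      _ = 1 / ((m : ℝ) + 1) := by
          rw [← Real.rpow_add hLpos]; simp
      _ < ε' := hm
  -- part 1
  have part1 : ∀ᵐ ω ∂P, Tendsto (fun n : ℕ => M n ω) atTop (nhds β) := by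
    filter_upwards [hdown (ξ₀ / 2) (by positivity) (by linarith)] with ω hω
    rw [← tendsto_sub_nhds_zero_iff]
    have hz : Tendsto (fun n : ℕ => Real.log ((n : ℝ) + 1) ^ (-(ξ₀ / 2)) *
        (Real.log ((n : ℝ) + 1) ^ (ξ₀ / 2) * (M n ω - β))) atTop (nhds 0) := by
      have hneg : Tendsto (fun n : ℕ => Real.log ((n : ℝ) + 1) ^ (-(ξ₀ / 2)))
          atTop (nhds 0) := (tendsto_rpow_neg_atTop (by positivity)).comp hL
      simpa using hneg.mul hω
    apply hz.congr'
    filter_upwards [hL1] with n hLn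
    rw [← mul_assoc, ← Real.rpow_add (by linarith), neg_add_cancel, Real.rpow_zero, one_mul]
  refine ⟨part1, fun γ hγ => ⟨?_, ?_⟩⟩
  -- part 2
  · have hup : ∀ K : ℕ, ∀ᵐ ω ∂P, ∀ᶠ n : ℕ in atTop,
        (K : ℝ) ≤ Real.log ((n : ℝ) + 1) ^ ((1 + γ) * ξ₀) * (M n ω - β) := by
      intro K
      set a : ℝ := (1 + γ) * ξ₀ with ha
      set t : ℕ → ℝ := fun n => ((K : ℝ) + 1) * Real.log ((n : ℝ) + 1) ^ (-a) with ht
      set g : ℕ → ℝ := fun n => ((n : ℝ) + 1) * gevCDF τ₀ μ₀ ξ₀ (β + t n) with hg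
      have h0 : ∀ n, 0 ≤ g n := fun n => mul_nonneg (by positivity) (gevCDF_nonneg _ _ _ _)
      have hgsum : Summable g := by
        apply summable_of_eventually_le_invsq h0
        set c : ℝ := (ξ₀ * ((K : ℝ) + 1) / τ₀) ^ (-1 / ξ₀) with hc
        have hcpos : 0 < c := Real.rpow_pos_of_pos (by positivity) _
        have hbig : Tendsto (fun n : ℕ => c * Real.log ((n : ℝ) + 1) ^ (a / ξ₀ - 1))
            atTop atTop := by
          have h1 : Tendsto (fun x : ℝ => x ^ (a / ξ₀ - 1)) atTop atTop :=
            tendsto_rpow_atTop (by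
              have : a / ξ₀ = 1 + γ := by
                rw [ha, mul_div_assoc, div_self hξ.ne', mul_one]
              rw [this]; linarith)
          exact (h1.comp hL).const_mul_atTop hcpos
        have hev1 : ∀ᶠ n : ℕ in atTop, 4 ≤ c * Real.log ((n : ℝ) + 1) ^ (a / ξ₀ - 1) :=
          hbig.eventually_ge_atTop 4
        filter_upwards [hev1, hL1] with n h1 h3
        set L : ℝ := Real.log ((n : ℝ) + 1) with hLdef
        have hLpos : 0 < L := lt_of_lt_of_le one_pos h3
        have htpos : 0 < t n := mul_pos (by positivity) (Real.rpow_pos_of_pos hLpos _)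
        set F : ℝ := gevCDF τ₀ μ₀ ξ₀ (β + t n) with hFdef
        have hF : F = Real.exp (-(c * L ^ (a / ξ₀))) := by
          rw [hFdef, hβ, gevCDF_add hτ hξ htpos, hc]
          congr 1
          have htn : t n = ((K : ℝ) + 1) * L ^ (-a) := rfl
          rw [htn,
            show ξ₀ * (((K : ℝ) + 1) * L ^ (-a)) / τ₀ = ξ₀ * ((K : ℝ) + 1) / τ₀ * L ^ (-a)
              by ring,
            Real.mul_rpow (by positivity) (Real.rpow_nonneg hLpos.le _),
            ← Real.rpow_mul hLpos.le,
            show -a * (-1 / ξ₀) = a / ξ₀ by ring]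
        have hexpL : Real.exp L = (n : ℝ) + 1 := Real.exp_log (by positivity)
        have hchain : 4 * L ≤ c * L ^ (a / ξ₀) := by
          have hsplit : L ^ (a / ξ₀) = L ^ (a / ξ₀ - 1) * L := by
            rw [← Real.rpow_add_one hLpos.ne' (a / ξ₀ - 1)]
            ring_nf
          rw [hsplit, ← mul_assoc]
          nlinarith
        have e1 : g n ≤ Real.exp L * Real.exp (-(4 * L)) := by
          have : F ≤ Real.exp (-(4 * L)) := by
            rw [hF]
            exact Real.exp_le_exp.2 (by linarith)
          calc g n = ((n : ℝ) + 1) * F := rfl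
            _ ≤ ((n : ℝ) + 1) * Real.exp (-(4 * L)) :=
                mul_le_mul_of_nonneg_left this (by positivity)
            _ = Real.exp L * Real.exp (-(4 * L)) := by rw [hexpL]
        have e2 : Real.exp L * Real.exp (-(4 * L)) ≤ Real.exp (-(2 * L)) := by
          rw [← Real.exp_add]
          exact Real.exp_le_exp.2 (by linarith)
        have e3 : Real.exp (-(2 * L)) = 1 / ((n : ℝ) + 1) ^ 2 := by
          rw [Real.exp_neg, show (2 : ℝ) * L = ((2 : ℕ) : ℝ) * L by norm_num,
            Real.exp_nat_mul, hexpL]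
          norm_num
        calc g n ≤ Real.exp L * Real.exp (-(4 * L)) := e1
          _ ≤ Real.exp (-(2 * L)) := e2
          _ = 1 / ((n : ℝ) + 1) ^ 2 := e3
      have hae := bc_helper P h0 hgsum (fun n => hub n (β + t n))
      filter_upwards [hae] with ω hω
      filter_upwards [hω, hL1] with n hn hLn
      simp only [Set.mem_setOf_eq, not_le] at hn
      set L : ℝ := Real.log ((n : ℝ) + 1) with hLdef
      have hLpos : 0 < L := lt_of_lt_of_le one_pos hLn
      have htn : t n = ((K : ℝ) + 1) * L ^ (-a) := rfl
      have hstep : ((K : ℝ) + 1) * (L ^ a * L ^ (-a)) ≤ L ^ a * (M n ω - β) := by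
        have := mul_le_mul_of_nonneg_left (show t n ≤ M n ω - β by
            rw [htn] at hn ⊢; linarith) (Real.rpow_nonneg hLpos.le a)
        calc ((K : ℝ) + 1) * (L ^ a * L ^ (-a)) = L ^ a * (((K : ℝ) + 1) * L ^ (-a)) := by ring
          _ ≤ L ^ a * (M n ω - β) := by rw [← htn]; exact this
      have hone : L ^ a * L ^ (-a) = 1 := by
        rw [← Real.rpow_add hLpos]; simp
      rw [hone, mul_one] at hstep
      linarith
    filter_upwards [ae_all_iff.2 hup] with ω hω
    rw [tendsto_atTop]
    intro b
    filter_upwards [hω ⌈b⌉₊] with n hn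
    exact le_trans (Nat.le_ceil b) hn
  -- part 3
  · by_cases hγ1 : γ < 1
    · exact hdown ((1 - γ) * ξ₀) (by nlinarith) (by nlinarith)
    · push_neg at hγ1
      filter_upwards [part1] with ω hω
      apply squeeze_zero_norm' ?_ (by simpa using (tendsto_sub_nhds_zero_iff.2 hω).norm)
      filter_upwards [hL1] with n hLn
      rw [norm_mul]
      have h1 : ‖Real.log ((n : ℝ) + 1) ^ ((1 - γ) * ξ₀)‖ ≤ 1 := by
        rw [Real.norm_eq_abs, abs_of_nonneg (Real.rpow_nonneg (by linarith) _)]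
        exact Real.rpow_le_one_of_one_le_of_nonpos hLn (by nlinarith)
      calc ‖Real.log ((n : ℝ) + 1) ^ ((1 - γ) * ξ₀)‖ * ‖M n ω - β‖
          ≤ 1 * ‖M n ω - β‖ := mul_le_mul_of_nonneg_right h1 (norm_nonneg _)
        _ = ‖M n ω - β‖ := one_mul _
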